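/- arXiv:2103.15109 — 3 statements merged into one kernel-verified Lean document; each statement's English description precedes it below -/
import Mathlib

section
/- Let H be a real Hilbert space, a a bounded coercive symmetric bilinear form on H, L₁, L₂ bounded linear functionals on H whose kernels satisfy: L₁ vanishes on a closed subspace T, L₂ vanishes on the orthogonal complement of T, where orthogonality is with respect to the inner product of H. Let Ũ solve a(Ũ, V) = L₁(V) + L₂(V) for all V, let U₁ solve a(U₁, V) = L₁(V), and let U₂ solve a(U₂, V) = L₂(V). Then Ũ = 0 if and only if U₁ = 0 and U₂ = 0. -/
/-- Consistency of the modified pre-shape gradient system (Theorem "Shape Regularized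
Problems"): with `L₁` vanishing on a closed subspace `T` and `L₂` vanishing on `Tᗮ`, the
Lax–Milgram solution for `L₁ + L₂` vanishes iff the solutions for `L₁` and `L₂` both vanish. -/
theorem stmt3
    {H : Type*} [NormedAddCommGroup H] [InnerProductSpace ℝ H] [CompleteSpace H]
    (a : H →ₗ[ℝ] H →ₗ[ℝ] ℝ)
    (hbdd : ∃ C : ℝ, ∀ u v : H, |a u v| ≤ C * ‖u‖ * ‖v‖)
    (hcoer : ∃ c : ℝ, 0 < c ∧ ∀ v : H, c * ‖v‖ ^ 2 ≤ a v v)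
    (hsymm : ∀ u v : H, a u v = a v u)
    (T : Submodule ℝ H) (hTc : IsClosed (T : Set H))
    (L₁ L₂ : H →L[ℝ] ℝ)
    (hL₁ : ∀ v ∈ T, L₁ v = 0)
    (hL₂ : ∀ v ∈ Tᗮ, L₂ v = 0)
    (Ut U₁ U₂ : H)
    (hUt : ∀ V : H, a Ut V = L₁ V + L₂ V)
    (hU₁ : ∀ V : H, a U₁ V = L₁ V)
    (hU₂ : ∀ V : H, a U₂ V = L₂ V) :
    Ut = 0 ↔ (U₁ = 0 ∧ U₂ = 0) := by
  obtain ⟨c, hc, hco⟩ := hcoer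
  have key : ∀ u : H, (∀ V : H, a u V = 0) → u = 0 := by
    intro u hu
    have h1 : c * ‖u‖ ^ 2 ≤ 0 := by simpa [hu u] using hco u
    have h2 : ‖u‖ = 0 := by
      by_contra hne
      have hp : 0 < ‖u‖ := (norm_nonneg u).lt_of_ne (Ne.symm hne)
      nlinarith [mul_pos hc (mul_pos hp hp)]
    simpa using h2
  haveI : CompleteSpace T := hTc.completeSpace_coe
  constructor
  · intro h0
    have hsum : ∀ V : H, L₁ V + L₂ V = 0 := by
      intro V
      have := hUt V
      rw [h0] at this
      simpa using this.symm
    have hL₂T : ∀ v ∈ T, L₂ v = 0 := fun v hv => by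
      have := hsum v; rw [hL₁ v hv] at this; linarith
    have hL₂0 : ∀ v : H, L₂ v = 0 := by
      intro v
      obtain ⟨p, hp, q, hq, rfl⟩ := T.exists_add_mem_mem_orthogonal v
      simp [map_add, hL₂T p hp, hL₂ q hq]
    have hL₁Tp : ∀ v ∈ Tᗮ, L₁ v = 0 := fun v hv => by
      have := hsum v; rw [hL₂ v hv] at this; linarith
    have hL₁0 : ∀ v : H, L₁ v = 0 := by
      intro v
      obtain ⟨p, hp, q, hq, rfl⟩ := T.exists_add_mem_mem_orthogonal v
      simp [map_add, hL₁ p hp, hL₁Tp q hq]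
    exact ⟨key U₁ (fun V => by rw [hU₁ V, hL₁0 V]),
           key U₂ (fun V => by rw [hU₂ V, hL₂0 V])⟩
  · rintro ⟨h1, h2⟩
    have hl1 : ∀ V : H, L₁ V = 0 := fun V => by
      have := hU₁ V; rw [h1] at this; simpa using this.symm
    have hl2 : ∀ V : H, L₂ V = 0 := fun V => by
      have := hU₂ V; rw [h2] at this; simpa using this.symm
    exact key Ut (fun V => by rw [hUt V, hl1 V, hl2 V]; ring)
end

section
/- Let H be a real Hilbert space, T a closed subspace with orthogonal projection P : H → T, a a bounded coercive symmetric bilinear form on H, and L₁, L₂, L₃ bounded linear functionals such that L₁ + L₂ vanishes on T and L₃ vanishes on T^⊥. Let U solve a(U, V) = L₁(V) + L₂(V) + L₃(P(V)) for all V ∈ H, let Ũ solve a(Ũ, V) = L₁(V) + L₂(V), and let W solve a(W, V) = L₃(V) for all V ∈ T (with W ∈ T, coercivity restricted to T). Then U = 0 if and only if Ũ = 0 and W = 0. -/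
/-- Consistency of the fully regularized pre-shape gradient (Theorem "Volume and Shape
Regularized Problems"): with `L₁ + L₂` vanishing on the closed subspace `T`, `L₃` vanishing
on `Tᗮ`, `P` the orthogonal projection onto `T`, `U` the Lax–Milgram solution with
right-hand side `L₁ + L₂ + L₃ ∘ P`, `Ut` the one with right-hand side `L₁ + L₂`, and
`W ∈ T` the solution of `a(W, ·) = L₃` on `T`, one has `U = 0 ↔ (Ut = 0 ∧ W = 0)`. -/
theorem stmt9
    {H : Type*} [NormedAddCommGroup H] [InnerProductSpace ℝ H] [CompleteSpace H]
    (T : Submodule ℝ H) (hTc : IsClosed (T : Set H))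
    (a : H →ₗ[ℝ] H →ₗ[ℝ] ℝ)
    (hbdd : ∃ C : ℝ, ∀ u v : H, |a u v| ≤ C * ‖u‖ * ‖v‖)
    (hcoer : ∃ c : ℝ, 0 < c ∧ ∀ v : H, c * ‖v‖ ^ 2 ≤ a v v)
    (hsymm : ∀ u v : H, a u v = a v u)
    (L₁ L₂ L₃ : H →L[ℝ] ℝ)
    (hL₁₂ : ∀ v ∈ T, L₁ v + L₂ v = 0)
    (hL₃ : ∀ v ∈ Tᗮ, L₃ v = 0)
    (U Ut W : H) (hWT : W ∈ T)
    (hU : haveI : CompleteSpace T := hTc.completeSpace_coe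
      ∀ V : H, a U V = L₁ V + L₂ V + L₃ ((T.orthogonalProjectionOnto V : T) : H))
    (hUt : ∀ V : H, a Ut V = L₁ V + L₂ V)
    (hW : ∀ V ∈ T, a W V = L₃ V) :
    U = 0 ↔ (Ut = 0 ∧ W = 0) := by
  haveI : CompleteSpace T := hTc.completeSpace_coe
  obtain ⟨c, hc, hco⟩ := hcoer
  have hzero : ∀ u : H, a u u = 0 → u = 0 := by
    intro u hu
    have := hco u
    rw [hu] at this
    have hx : ‖u‖ ^ 2 ≤ 0 := by
      by_contra h
      push_neg at h
      nlinarith [mul_pos hc h]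
    have hx2 : ‖u‖ ^ 2 = 0 := le_antisymm hx (sq_nonneg _)
    have : ‖u‖ = 0 := by
      have := pow_eq_zero_iff (n := 2) (by norm_num) |>.mp hx2
      exact this
    simpa using this
  constructor
  · rintro rfl
    have hrhs : ∀ V : H, L₁ V + L₂ V + L₃ ((T.orthogonalProjectionOnto V : T) : H) = 0 := by
      intro V
      have := hU V
      simpa using this.symm
    -- L₃ vanishes on T
    have hL₃T : ∀ v ∈ T, L₃ v = 0 := by
      intro v hv
      have h1 := hrhs v
      rw [show ((T.orthogonalProjectionOnto v : T) : H) = v from T.starProjection_eq_self_iff.mpr hv] at h1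
      have h2 := hL₁₂ v hv
      linarith
    -- L₁ + L₂ vanishes on Tᗮ
    have hL₁₂o : ∀ v ∈ Tᗮ, L₁ v + L₂ v = 0 := by
      intro v hv
      have h1 := hrhs v
      rw [Submodule.orthogonalProjectionOnto_apply_of_mem_orthogonal hv] at h1
      simpa using h1
    -- L₁ + L₂ vanishes everywhere
    have hL₁₂all : ∀ V : H, L₁ V + L₂ V = 0 := by
      intro V
      have hdecomp : V = ((T.orthogonalProjectionOnto V : T) : H)
          + (V - ((T.orthogonalProjectionOnto V : T) : H)) := by abel
      have hmemT : ((T.orthogonalProjectionOnto V : T) : H) ∈ T := (T.orthogonalProjectionOnto V).2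
      have hmemO : (V - ((T.orthogonalProjectionOnto V : T) : H)) ∈ Tᗮ :=
        T.sub_starProjection_mem_orthogonal V
      calc L₁ V + L₂ V
          = (L₁ ((T.orthogonalProjectionOnto V : T) : H)
              + L₂ ((T.orthogonalProjectionOnto V : T) : H))
            + (L₁ (V - ((T.orthogonalProjectionOnto V : T) : H))
              + L₂ (V - ((T.orthogonalProjectionOnto V : T) : H))) := by
            rw [map_sub, map_sub]; ring
        _ = 0 := by rw [hL₁₂ _ hmemT, hL₁₂o _ hmemO]; ring
    refine ⟨hzero Ut ?_, hzero W ?_⟩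
    · rw [hUt Ut, hL₁₂all]
    · rw [hW W hWT, hL₃T W hWT]
  · rintro ⟨rfl, rfl⟩
    have hL₁₂all : ∀ V : H, L₁ V + L₂ V = 0 := by
      intro V
      have := hUt V
      simpa using this.symm
    have hL₃T : ∀ v ∈ T, L₃ v = 0 := by
      intro v hv
      have := hW v hv
      simpa using this.symm
    apply hzero
    rw [hU U, hL₁₂all, hL₃T _ (T.orthogonalProjectionOnto U).2]
    ring
end

section
/- Let A be a real n×n symmetric positive semidefinite matrix and ε > 0. Then for any n×n matrices U (viewed through its gradient representation), the map U ↦ (ε² + ⟨U, U⟩_F)^{p/2 − 1} · U, for p ≥ 2, is monotone: for all matrices X, Y, ⟨(ε² + ‖X‖_F²)^{p/2−1} X − (ε² + ‖Y‖_F²)^{p/2−1} Y, X − Y⟩_F ≥ 0. -/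
set_option maxHeartbeats 1000000

/-- Monotonicity of the regularized `p`-Laplacian flux in the Frobenius inner product: for
`p ≥ 2` and `ε > 0`, the map `X ↦ (ε² + ‖X‖_F²)^{p/2−1} · X` is monotone on `n × n` real
matrices. -/
theorem stmt17 {n : ℕ}
    (A : Matrix (Fin n) (Fin n) ℝ) (hA : A.IsSymm) (hA' : A.PosSemidef)
    (ε : ℝ) (hε : 0 < ε) (p : ℝ) (hp : 2 ≤ p) :
    ∀ X Y : Matrix (Fin n) (Fin n) ℝ,
      0 ≤ ∑ i : Fin n, ∑ j : Fin n,
        ((ε ^ 2 + ∑ k : Fin n, ∑ l : Fin n, (X k l) ^ 2) ^ (p / 2 - 1) * X i j -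
            (ε ^ 2 + ∑ k : Fin n, ∑ l : Fin n, (Y k l) ^ 2) ^ (p / 2 - 1) * Y i j) *
          (X i j - Y i j) := by
  intro X Y
  set Sx := ∑ k : Fin n, ∑ l : Fin n, (X k l) ^ 2 with hSx
  set Sy := ∑ k : Fin n, ∑ l : Fin n, (Y k l) ^ 2 with hSy
  set C := ∑ k : Fin n, ∑ l : Fin n, X k l * Y k l with hC
  set fA := (ε ^ 2 + Sx) ^ (p / 2 - 1) with hfA
  set fB := (ε ^ 2 + Sy) ^ (p / 2 - 1) with hfB
  have hSx0 : 0 ≤ Sx := Finset.sum_nonneg fun i _ => Finset.sum_nonneg fun j _ => sq_nonneg _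
  have hSy0 : 0 ≤ Sy := Finset.sum_nonneg fun i _ => Finset.sum_nonneg fun j _ => sq_nonneg _
  have hexp : 0 ≤ p / 2 - 1 := by linarith
  have hfA0 : 0 ≤ fA := Real.rpow_nonneg (by positivity) _
  have hfB0 : 0 ≤ fB := Real.rpow_nonneg (by positivity) _
  -- rewrite the sum
  have hsum : (∑ i : Fin n, ∑ j : Fin n,
      (fA * X i j - fB * Y i j) * (X i j - Y i j))
      = fA * Sx + fB * Sy - (fA + fB) * C := by
    rw [hSx, hSy, hC]
    simp only [Finset.mul_sum, ← Finset.sum_add_distrib, ← Finset.sum_sub_distrib]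
    apply Finset.sum_congr rfl; intro i _
    apply Finset.sum_congr rfl; intro j _
    ring
  rw [hsum]
  -- Cauchy-Schwarz
  set s := Real.sqrt Sx with hs
  set t := Real.sqrt Sy with ht
  have hs2 : s ^ 2 = Sx := Real.sq_sqrt hSx0
  have ht2 : t ^ 2 = Sy := Real.sq_sqrt hSy0
  have hs0 : 0 ≤ s := Real.sqrt_nonneg _
  have ht0 : 0 ≤ t := Real.sqrt_nonneg _
  have hCS : C ≤ s * t := by
    have h1 : C ^ 2 ≤ Sx * Sy := by
      have h := Finset.sum_mul_sq_le_sq_mul_sq (Finset.univ : Finset (Fin n × Fin n))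
        (fun q => X q.1 q.2) (fun q => Y q.1 q.2)
      simpa only [Fintype.sum_prod_type, hSx, hSy, hC] using h
    calc C ≤ |C| := le_abs_self _
      _ = Real.sqrt (C ^ 2) := (Real.sqrt_sq_eq_abs C).symm
      _ ≤ Real.sqrt (Sx * Sy) := Real.sqrt_le_sqrt h1
      _ = s * t := by rw [Real.sqrt_mul hSx0, hs, ht]
  have key : (fA + fB) * C ≤ (fA + fB) * (s * t) :=
    mul_le_mul_of_nonneg_left hCS (by positivity)
  have hfmono : ∀ u v : ℝ, 0 ≤ u → u ≤ v →
      (ε ^ 2 + u) ^ (p / 2 - 1) ≤ (ε ^ 2 + v) ^ (p / 2 - 1) := fun u v hu huv =>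
    Real.rpow_le_rpow (by positivity) (by linarith) hexp
  have final : 0 ≤ (s - t) * (fA * s - fB * t) := by
    rcases le_total t s with h | h
    · have hS : Sy ≤ Sx := by rw [← hs2, ← ht2]; exact pow_le_pow_left₀ ht0 h 2
      have hf : fB ≤ fA := hfmono Sy Sx hSy0 hS
      exact mul_nonneg (by linarith) (by nlinarith)
    · have hS : Sx ≤ Sy := by rw [← hs2, ← ht2]; exact pow_le_pow_left₀ hs0 h 2
      have hf : fA ≤ fB := hfmono Sx Sy hSx0 hS
      have h1 : fA * s ≤ fB * t := mul_le_mul hf h hs0 hfB0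
      nlinarith
  nlinarith [final, key, hs2, ht2]
end
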